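/- Non-colluding secrecy rate CDF: if R₁² is exponential with rate πλe, P, σℓ², σe², rℓ > 0, b ≥ 1, R_s = [log₂(1 + P/(rℓ^{2b}σℓ²)) − log₂(1 + P/(R₁^{2b}σe²))]⁺, and Rℓ = log₂(1 + P/(rℓ^{2b}σℓ²)), then for 0 ≤ ϱ < Rℓ: P(R_s ≤ ϱ) = 1 − exp(−πλe ((P/σe²)/((1 + P/(rℓ^{2b}σℓ²))2^{−ϱ} − 1))^{1/b}), while P(R_s ≤ ϱ) = 1 for ϱ ≥ Rℓ. -/

import Mathlib

open MeasureTheory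

lemma aux_hasDeriv (a : ℝ) (x : ℝ) :
    HasDerivAt (fun x => -Real.exp (-(a * x))) (a * Real.exp (-(a * x))) x := by
  have h1 : HasDerivAt (fun x : ℝ => -(a * x)) (-a) x := by
    exact (((hasDerivAt_id x).const_mul a).neg : HasDerivAt (fun y => -(a * id y)) (-(a * 1)) x).congr_deriv (by ring)
  have h2 : HasDerivAt (fun x => -Real.exp (-(a * x))) (-(Real.exp (-(a * x)) * -a)) x := by have h := ((Real.hasDerivAt_exp (-(a * x))).comp x h1).neg; exact h
  convert h2 using 1; ring

lemma aux_int_Ioc (a T : ℝ) (hT : 0 ≤ T) :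
    ∫ x in Set.Ioc 0 T, a * Real.exp (-(a * x)) = 1 - Real.exp (-(a * T)) := by
  rw [← intervalIntegral.integral_of_le hT]
  rw [intervalIntegral.integral_eq_sub_of_hasDerivAt (fun x _ => aux_hasDeriv a x)
    ((Continuous.mul continuous_const (by fun_prop)).intervalIntegrable 0 T)]
  simp [Real.exp_zero]
  ring

lemma aux_int_Ioi (a : ℝ) (ha : 0 < a) :
    ∫ x in Set.Ioi 0, a * Real.exp (-(a * x)) = 1 := by
  have hint : IntegrableOn (fun x => a * Real.exp (-(a * x))) (Set.Ioi 0) := by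
    have := (exp_neg_integrableOn_Ioi 0 ha).const_mul a
    simpa [neg_mul, mul_comm, IntegrableOn] using this
  have htend : Filter.Tendsto (fun x => -Real.exp (-(a * x))) Filter.atTop (nhds 0) := by
    have : Filter.Tendsto (fun x : ℝ => -(a * x)) Filter.atTop Filter.atBot := by
      apply Filter.tendsto_neg_atBot_iff.mpr
      exact Filter.Tendsto.const_mul_atTop ha Filter.tendsto_id
    simpa using (Real.tendsto_exp_atBot.comp this).neg
  have := integral_Ioi_of_hasDerivAt_of_tendsto' (f := fun x => -Real.exp (-(a * x)))
    (fun x _ => aux_hasDeriv a x) hint htend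
  simpa using this

theorem stmt17 {Ω : Type*} [MeasurableSpace Ω] (Prob : Measure Ω) [IsProbabilityMeasure Prob]
    (lamE Pw σl2 σe2 rl b : ℝ)
    (hlamE : 0 < lamE) (hP : 0 < Pw) (hσl : 0 < σl2) (hσe : 0 < σe2) (hrl : 0 < rl)
    (hb : 1 ≤ b)
    (X : Ω → ℝ) (hXmeas : Measurable X)
    (hX : ∀ s : Set ℝ, MeasurableSet s →
      Prob {ω | X ω ∈ s} = ENNReal.ofReal (∫ x in s ∩ Set.Ioi 0,
        Real.pi * lamE * Real.exp (-(Real.pi * lamE * x)))) :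
    (∀ ϱ : ℝ, 0 ≤ ϱ → ϱ < Real.logb 2 (1 + Pw / (rl ^ (2 * b) * σl2)) →
      Prob {ω | max 0 (Real.logb 2 (1 + Pw / (rl ^ (2 * b) * σl2)) -
          Real.logb 2 (1 + (Pw / σe2) * X ω ^ (-b))) ≤ ϱ} =
        ENNReal.ofReal (1 - Real.exp (-(Real.pi * lamE *
          ((Pw / σe2) /
            ((1 + Pw / (rl ^ (2 * b) * σl2)) * (2 : ℝ) ^ (-ϱ) - 1)) ^ (1 / b))))) ∧
    ∀ ϱ : ℝ, Real.logb 2 (1 + Pw / (rl ^ (2 * b) * σl2)) ≤ ϱ →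
      Prob {ω | max 0 (Real.logb 2 (1 + Pw / (rl ^ (2 * b) * σl2)) -
          Real.logb 2 (1 + (Pw / σe2) * X ω ^ (-b))) ≤ ϱ} = 1 := by
  set a : ℝ := Real.pi * lamE with ha_def
  have ha : 0 < a := mul_pos Real.pi_pos hlamE
  set A : ℝ := 1 + Pw / (rl ^ (2 * b) * σl2) with hA_def
  set c : ℝ := Pw / σe2 with hc_def
  have hc : 0 < c := div_pos hP hσe
  have hA : 1 < A := by
    have : 0 < Pw / (rl ^ (2 * b) * σl2) := by positivity
    simp only [hA_def]; linarith
  have hb0 : 0 < b := lt_of_lt_of_le zero_lt_one hb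
  have hRl : 0 < Real.logb 2 A := Real.logb_pos one_lt_two hA
  constructor
  · intro ϱ hϱ0 hϱ
    set D : ℝ := A * (2 : ℝ) ^ (-ϱ) - 1 with hD_def
    have h2ϱ : (2 : ℝ) ^ ϱ < A := (Real.lt_logb_iff_rpow_lt one_lt_two (by linarith)).mp hϱ
    have h2pos : (0 : ℝ) < (2 : ℝ) ^ ϱ := Real.rpow_pos_of_pos two_pos ϱ
    have hD : 0 < D := by
      have : (1 : ℝ) < A * (2 : ℝ) ^ (-ϱ) := by
        rw [Real.rpow_neg (by norm_num), ← div_eq_mul_inv, lt_div_iff₀ h2pos, one_mul]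
        exact h2ϱ
      simp only [hD_def]; linarith
    set T : ℝ := (c / D) ^ (1 / b) with hT_def
    have hT : 0 < T := Real.rpow_pos_of_pos (div_pos hc hD) _
    have hTb : T ^ b = c / D := by
      rw [hT_def, one_div, Real.rpow_inv_rpow (le_of_lt (div_pos hc hD)) (ne_of_gt hb0)]
    -- the event as a preimage
    have hset : {ω | max 0 (Real.logb 2 A - Real.logb 2 (1 + c * X ω ^ (-b))) ≤ ϱ}
        = {ω | X ω ∈ {x : ℝ | max 0 (Real.logb 2 A - Real.logb 2 (1 + c * x ^ (-b))) ≤ ϱ}} := rfl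
    have hsmeas : MeasurableSet {x : ℝ | max 0 (Real.logb 2 A - Real.logb 2 (1 + c * x ^ (-b))) ≤ ϱ} := by
      have hg : Measurable fun x : ℝ =>
          max 0 (Real.logb 2 A - Real.logb 2 (1 + c * x ^ (-b))) := by
        apply measurable_const.max
        apply measurable_const.sub
        have h1 : Measurable fun x : ℝ => 1 + c * x ^ (-b) := by
          fun_prop
        exact (Real.measurable_log.comp h1).div_const _
      exact hg measurableSet_Iic
    have hinter : {x : ℝ | max 0 (Real.logb 2 A - Real.logb 2 (1 + c * x ^ (-b))) ≤ ϱ}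
        ∩ Set.Ioi 0 = Set.Ioc 0 T := by
      ext x
      simp only [Set.mem_inter_iff, Set.mem_setOf_eq, Set.mem_Ioi, Set.mem_Ioc, and_comm]
      apply and_congr_right
      intro hx
      have hxb : 0 < x ^ (-b) := Real.rpow_pos_of_pos hx _
      have hupos : (0 : ℝ) < 1 + c * x ^ (-b) := by positivity
      rw [max_le_iff, and_iff_right hϱ0, sub_le_iff_le_add, ← sub_le_iff_le_add',
        Real.le_logb_iff_rpow_le one_lt_two hupos, Real.rpow_sub two_pos,
        Real.rpow_logb two_pos (by norm_num) (by linarith), div_eq_mul_inv,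
        ← Real.rpow_neg (by norm_num : (0:ℝ) ≤ 2)]
      constructor
      · intro h
        have hDle : D ≤ c * x ^ (-b) := by simp only [hD_def]; linarith
        have hxb' : x ^ (-b) = (x ^ b)⁻¹ := by
          rw [Real.rpow_neg hx.le]
        have hxbpos : 0 < x ^ b := Real.rpow_pos_of_pos hx _
        have : x ^ b ≤ c / D := by
          rw [hxb'] at hDle
          rw [le_div_iff₀ hD]
          calc x ^ b * D ≤ x ^ b * (c * (x ^ b)⁻¹) := by
                exact mul_le_mul_of_nonneg_left hDle hxbpos.le
            _ = c := by field_simp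
        rw [← hTb] at this
        exact (Real.rpow_le_rpow_iff hx.le hT.le hb0).mp this
      · intro h
        have hxb2 : x ^ b ≤ c / D := hTb ▸ (Real.rpow_le_rpow_iff hx.le hT.le hb0).mpr h
        have hxbpos : 0 < x ^ b := Real.rpow_pos_of_pos hx _
        have hDle : D ≤ c * x ^ (-b) := by
          rw [Real.rpow_neg hx.le, ← div_eq_mul_inv, le_div_iff₀ hxbpos]
          rw [le_div_iff₀ hD] at hxb2
          rw [mul_comm]; exact hxb2
        simp only [hD_def] at hDle; linarith
    rw [hset, hX _ hsmeas, hinter, aux_int_Ioc a T hT.le]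
  · intro ϱ hϱ
    have hsub : {ω | X ω ∈ Set.Ioi (0:ℝ)} ⊆
        {ω | max 0 (Real.logb 2 A - Real.logb 2 (1 + c * X ω ^ (-b))) ≤ ϱ} := by
      intro ω hω
      simp only [Set.mem_setOf_eq, Set.mem_Ioi] at *
      have hxb : 0 < X ω ^ (-b) := Real.rpow_pos_of_pos hω _
      have hL : 0 ≤ Real.logb 2 (1 + c * X ω ^ (-b)) :=
        Real.logb_nonneg one_lt_two (by nlinarith)
      exact max_le (hRl.le.trans hϱ) (by linarith)
    have h1 : Prob {ω | X ω ∈ Set.Ioi (0:ℝ)} = 1 := by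
      rw [hX _ measurableSet_Ioi, Set.inter_self, aux_int_Ioi a ha]
      simp
    exact le_antisymm prob_le_one (h1 ▸ measure_mono hsub)
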